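/- Let n ≥ 2, d ≥ 1, r ≥ 1 be integers, let f = r − 1 − (n−1)(d−1), and let g = 1 if f ≤ −2, g = f + 2 if −1 ≤ f ≤ n−2, and g = n if f ≥ n−1. Then m_e(K_n^d, r) ≤ ∑_{i=0}^{n-1} m_e(K_n^{d-1}, r−i) + C(g, 2)·n^{d-1}, where m_e(H, j) is interpreted as 0 for j < 0. -/

import Mathlib

/-- One round of the `r`-edge bootstrap percolation process on `G`: an inactive edge
becomes active if one of its endpoints is incident to at least `r` active edges. -/
def edgeStep {V : Type*} (G : SimpleGraph V) (r : ℕ) (A : Set (Sym2 V)) : Set (Sym2 V) :=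
  A ∪ {e | e ∈ G.edgeSet ∧ ∃ v ∈ e, r ≤ {f | f ∈ G.edgeSet ∧ v ∈ f ∧ f ∈ A}.ncard}

/-- A set `A` of edges of `G` percolates in the `r`-edge bootstrap percolation process
if iterating the activation rule eventually activates every edge of `G`. -/
def EdgePercolates {V : Type*} (G : SimpleGraph V) (r : ℕ) (A : Set (Sym2 V)) : Prop :=
  A ⊆ G.edgeSet ∧ ∃ k, (edgeStep G r)^[k] A = G.edgeSet

/-- `me G r` is the minimum size of a percolating set in the `r`-edge bootstrap
percolation process on `G`. -/
noncomputable def me {V : Type*} (G : SimpleGraph V) (r : ℕ) : ℕ :=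
  sInf {k | ∃ A, EdgePercolates G r A ∧ A.ncard = k}

/-- The Hamming graph `K_n^d`: vertices are `d`-tuples over `{0, …, n−1}`, with two
tuples adjacent if and only if they differ in exactly one coordinate. -/
def hammingGraph (n d : ℕ) : SimpleGraph (Fin d → Fin n) where
  Adj x y := ∃! i, x i ≠ y i
  symm := by
    constructor
    rintro x y ⟨i, hi, hu⟩
    exact ⟨i, hi.symm, fun j hj => hu j hj.symm⟩
  loopless := by
    constructor
    rintro x ⟨i, hi, -⟩
    exact hi rfl

set_option linter.unusedSectionVars false
set_option linter.unusedVariables false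

section Aux

variable {V : Type*} {W : Type*} [Finite V]

lemma subset_edgeStep (G : SimpleGraph V) (r : ℕ) (A : Set (Sym2 V)) :
    A ⊆ edgeStep G r A := Set.subset_union_left

lemma edgeStep_mono (G : SimpleGraph V) (r : ℕ) {A B : Set (Sym2 V)} (h : A ⊆ B) :
    edgeStep G r A ⊆ edgeStep G r B := by
  rintro e (he | ⟨he1, v, hv, hc⟩)
  · exact Or.inl (h he)
  · refine Or.inr ⟨he1, v, hv, hc.trans (Set.ncard_le_ncard ?_ (Set.toFinite _))⟩
    rintro f ⟨h1, h2, h3⟩; exact ⟨h1, h2, h h3⟩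

lemma edgeStep_iterate_mono (G : SimpleGraph V) (r : ℕ) {A B : Set (Sym2 V)} (h : A ⊆ B)
    (k : ℕ) : (edgeStep G r)^[k] A ⊆ (edgeStep G r)^[k] B := by
  induction k generalizing A B with
  | zero => exact h
  | succ k ih => rw [Function.iterate_succ_apply, Function.iterate_succ_apply]
                 exact ih (edgeStep_mono G r h)

lemma subset_edgeStep_iterate (G : SimpleGraph V) (r : ℕ) (A : Set (Sym2 V)) (k : ℕ) :
    A ⊆ (edgeStep G r)^[k] A := by
  induction k with
  | zero => rfl
  | succ k ih =>
    rw [Function.iterate_succ_apply']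
    exact ih.trans (subset_edgeStep G r _)

lemma edgeStep_iterate_le (G : SimpleGraph V) (r : ℕ) (A : Set (Sym2 V)) {k l : ℕ}
    (h : k ≤ l) : (edgeStep G r)^[k] A ⊆ (edgeStep G r)^[l] A := by
  obtain ⟨m, rfl⟩ := Nat.exists_eq_add_of_le h
  rw [add_comm, Function.iterate_add_apply]
  exact subset_edgeStep_iterate G r _ m

lemma edgeStep_subset_edgeSet (G : SimpleGraph V) (r : ℕ) {A : Set (Sym2 V)}
    (h : A ⊆ G.edgeSet) : edgeStep G r A ⊆ G.edgeSet := by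
  rintro e (he | ⟨he1, -⟩)
  · exact h he
  · exact he1

lemma edgeStep_iterate_subset_edgeSet (G : SimpleGraph V) (r : ℕ) {A : Set (Sym2 V)}
    (h : A ⊆ G.edgeSet) (k : ℕ) : (edgeStep G r)^[k] A ⊆ G.edgeSet := by
  induction k with
  | zero => exact h
  | succ k ih => rw [Function.iterate_succ_apply']; exact edgeStep_subset_edgeSet G r ih

/-- `Reaches G r A B`: starting from `A`, the process eventually contains `B`. -/
def Reaches (G : SimpleGraph V) (r : ℕ) (A B : Set (Sym2 V)) : Prop :=
  ∃ k, B ⊆ (edgeStep G r)^[k] A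

lemma Reaches.of_subset {G : SimpleGraph V} {r : ℕ} {A B : Set (Sym2 V)} (h : B ⊆ A) :
    Reaches G r A B := ⟨0, h⟩

lemma Reaches.trans {G : SimpleGraph V} {r : ℕ} {A B C : Set (Sym2 V)}
    (h1 : Reaches G r A B) (h2 : Reaches G r B C) : Reaches G r A C := by
  obtain ⟨k, hk⟩ := h1; obtain ⟨l, hl⟩ := h2
  exact ⟨l + k, hl.trans ((edgeStep_iterate_mono G r hk l).trans
    (by rw [← Function.iterate_add_apply]))⟩

lemma Reaches.mono {G : SimpleGraph V} {r : ℕ} {A A' B : Set (Sym2 V)}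
    (h : A ⊆ A') (h1 : Reaches G r A B) : Reaches G r A' B := by
  obtain ⟨k, hk⟩ := h1
  exact ⟨k, hk.trans (edgeStep_iterate_mono G r h k)⟩

lemma Reaches.union {G : SimpleGraph V} {r : ℕ} {A B C : Set (Sym2 V)}
    (h1 : Reaches G r A B) (h2 : Reaches G r A C) : Reaches G r A (B ∪ C) := by
  obtain ⟨k, hk⟩ := h1; obtain ⟨l, hl⟩ := h2
  exact ⟨max k l, Set.union_subset (hk.trans (edgeStep_iterate_le G r A (le_max_left k l)))
    (hl.trans (edgeStep_iterate_le G r A (le_max_right k l)))⟩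

lemma Reaches.self {G : SimpleGraph V} {r : ℕ} {A : Set (Sym2 V)} : Reaches G r A A :=
  Reaches.of_subset subset_rfl

lemma percolates_of_reaches {G : SimpleGraph V} {r : ℕ} {A : Set (Sym2 V)}
    (hA : A ⊆ G.edgeSet) (h : Reaches G r A G.edgeSet) : EdgePercolates G r A := by
  obtain ⟨k, hk⟩ := h
  exact ⟨hA, k, le_antisymm (edgeStep_iterate_subset_edgeSet G r hA k) hk⟩

lemma me_le {G : SimpleGraph V} {r : ℕ} {A : Set (Sym2 V)} (h : EdgePercolates G r A) :
    me G r ≤ A.ncard := Nat.sInf_le ⟨A, h, rfl⟩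

lemma exists_me [Finite V] (G : SimpleGraph V) (r : ℕ) :
    ∃ A, EdgePercolates G r A ∧ A.ncard = me G r := by
  have hne : {k | ∃ A, EdgePercolates G r A ∧ A.ncard = k}.Nonempty :=
    ⟨G.edgeSet.ncard, G.edgeSet, ⟨subset_rfl, 0, rfl⟩, rfl⟩
  exact Nat.sInf_mem hne

/-- counting gadget: a family of active edges `s(v, u)`, `u ∈ S`, gives a lower bound. -/
lemma card_le_ncard_mem {v : V} {P : Set (Sym2 V)} (S : Finset V)
    (h : ∀ u ∈ S, s(v, u) ∈ P) : S.card ≤ {e | e ∈ P ∧ v ∈ e}.ncard := by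
  classical
  have hinj : Function.Injective (fun u => s(v, u)) := fun a b hab => Sym2.congr_right.mp hab
  calc S.card = (S.image (fun u => s(v, u))).card := (Finset.card_image_of_injective S hinj).symm
    _ = (↑(S.image (fun u => s(v, u))) : Set (Sym2 V)).ncard := (Set.ncard_coe_finset _).symm
    _ ≤ _ := by
        refine Set.ncard_le_ncard ?_ ?_
        · intro e he
          simp only [Finset.coe_image, Set.mem_image, Finset.mem_coe] at he
          obtain ⟨u, hu, rfl⟩ := he
          exact ⟨h u hu, Sym2.mem_mk_left v u⟩
        · exact Set.Finite.subset (Set.toFinite P) (fun e he => he.1)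

lemma Reaches.subset_right {G : SimpleGraph V} {r : ℕ} {A B C : Set (Sym2 V)}
    (h : C ⊆ B) (hr : Reaches G r A B) : Reaches G r A C := by
  obtain ⟨k, hk⟩ := hr; exact ⟨k, h.trans hk⟩

lemma percolates_zero (G : SimpleGraph V) : EdgePercolates G 0 ∅ := by
  refine ⟨Set.empty_subset _, 1, ?_⟩
  rw [Function.iterate_one]
  refine Set.Subset.antisymm (edgeStep_subset_edgeSet G 0 (Set.empty_subset _)) ?_
  intro e he
  exact Or.inr ⟨he, e.out.1, Sym2.out_fst_mem e, Nat.zero_le _⟩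

section P2
variable {V W : Type*} [Finite V] [Finite W]

lemma map_mem_edgeSet {G : SimpleGraph V} {H : SimpleGraph W} {φ : W → V}
    (hadj : ∀ a b, H.Adj a b → G.Adj (φ a) (φ b)) {e : Sym2 W} (he : e ∈ H.edgeSet) :
    Sym2.map φ e ∈ G.edgeSet := by
  induction e with
  | _ a b => exact hadj a b he

lemma embed_step {G : SimpleGraph V} {H : SimpleGraph W} {φ : W → V}
    (hφ : Function.Injective φ)
    (hadj : ∀ a b, H.Adj a b → G.Adj (φ a) (φ b))
    {ρ t s : ℕ} (hts : ρ ≤ t + s) {D : Set (Sym2 V)} (hD : D ⊆ G.edgeSet)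
    (hdisj : ∀ e ∈ D, e ∉ Sym2.map φ '' H.edgeSet)
    (hcount : ∀ w : W, s ≤ {e | e ∈ D ∧ φ w ∈ e}.ncard)
    {A : Set (Sym2 W)} (hA : A ⊆ H.edgeSet) :
    Sym2.map φ '' (edgeStep H t A) ∪ D ⊆ edgeStep G ρ (Sym2.map φ '' A ∪ D) := by
  rintro e' (⟨e, he, rfl⟩ | hd)
  swap
  · exact subset_edgeStep G ρ _ (Or.inr hd)
  rcases he with he | ⟨he1, w, hw, hc⟩
  · exact subset_edgeStep G ρ _ (Or.inl ⟨e, he, rfl⟩)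
  refine Or.inr ⟨map_mem_edgeSet hadj he1, φ w, Sym2.mem_map.2 ⟨w, hw, rfl⟩, ?_⟩
  -- counting
  set NH : Set (Sym2 W) := {f | f ∈ H.edgeSet ∧ w ∈ f ∧ f ∈ A} with hNH
  set S1 : Set (Sym2 V) := Sym2.map φ '' NH with hS1
  set S2 : Set (Sym2 V) := {e | e ∈ D ∧ φ w ∈ e} with hS2
  have hsub : S1 ∪ S2 ⊆ {f | f ∈ G.edgeSet ∧ φ w ∈ f ∧ f ∈ Sym2.map φ '' A ∪ D} := by
    rintro x (⟨f, ⟨hf1, hf2, hf3⟩, rfl⟩ | ⟨hx1, hx2⟩)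
    · exact ⟨map_mem_edgeSet hadj hf1, Sym2.mem_map.2 ⟨w, hf2, rfl⟩, Or.inl ⟨f, hf3, rfl⟩⟩
    · exact ⟨hD hx1, hx2, Or.inr hx1⟩
  have hdis : Disjoint S1 S2 := by
    rw [Set.disjoint_left]
    rintro x ⟨f, hf, rfl⟩ ⟨hx1, -⟩
    exact hdisj _ hx1 ⟨f, hf.1, rfl⟩
  calc ρ ≤ t + s := hts
    _ ≤ NH.ncard + S2.ncard := Nat.add_le_add hc (hcount w)
    _ = S1.ncard + S2.ncard := by rw [hS1, Set.ncard_image_of_injective _ (Sym2.map.injective hφ)]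
    _ = (S1 ∪ S2).ncard := (Set.ncard_union_eq hdis (Set.toFinite _) (Set.toFinite _)).symm
    _ ≤ _ := Set.ncard_le_ncard hsub (Set.toFinite _)

lemma embed_reaches {G : SimpleGraph V} {H : SimpleGraph W} {φ : W → V}
    (hφ : Function.Injective φ)
    (hadj : ∀ a b, H.Adj a b → G.Adj (φ a) (φ b))
    {ρ t s : ℕ} (hts : ρ ≤ t + s) {D : Set (Sym2 V)} (hD : D ⊆ G.edgeSet)
    (hdisj : ∀ e ∈ D, e ∉ Sym2.map φ '' H.edgeSet)
    (hcount : ∀ w : W, s ≤ {e | e ∈ D ∧ φ w ∈ e}.ncard)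
    {A₀ : Set (Sym2 W)} (hA : EdgePercolates H t A₀) :
    Reaches G ρ (Sym2.map φ '' A₀ ∪ D) (Sym2.map φ '' H.edgeSet) := by
  obtain ⟨hA0, k, hk⟩ := hA
  refine ⟨k, ?_⟩
  have key : ∀ j, Sym2.map φ '' ((edgeStep H t)^[j] A₀) ∪ D ⊆
      (edgeStep G ρ)^[j] (Sym2.map φ '' A₀ ∪ D) := by
    intro j
    induction j with
    | zero => exact subset_rfl
    | succ j ih =>
      rw [Function.iterate_succ_apply', Function.iterate_succ_apply']
      exact (embed_step hφ hadj hts hD hdisj hcount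
        (edgeStep_iterate_subset_edgeSet H t hA0 j)).trans (edgeStep_mono G ρ ih)
  calc Sym2.map φ '' H.edgeSet ⊆ Sym2.map φ '' ((edgeStep H t)^[k] A₀) ∪ D := by
        rw [hk]; exact Set.subset_union_left
    _ ⊆ _ := key k

end P2

section P3
open Fin Function

lemma ncard_biUnion_le' {ι β : Type*} [Finite β] (s : ι → Set β) (t : Finset ι) :
    (⋃ i ∈ t, s i).ncard ≤ ∑ i ∈ t, (s i).ncard := by
  classical
  induction t using Finset.induction with
  | empty => simp
  | insert _ _ hni ih =>
    rename_i a t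
    rw [Finset.set_biUnion_insert, Finset.sum_insert hni]
    exact (Set.ncard_union_le _ _).trans (Nat.add_le_add_left ih _)

variable {n m : ℕ}

/-- embedding of the `a`-th layer -/
def lay (a : Fin n) (x : Fin m → Fin n) : Fin (m + 1) → Fin n := Fin.snoc x a

lemma lay_last (a : Fin n) (x : Fin m → Fin n) : lay a x (Fin.last m) = a := Fin.snoc_last _ _

lemma lay_inj {a b : Fin n} {x y : Fin m → Fin n} (h : lay a x = lay b y) :
    a = b ∧ x = y := by
  constructor
  · have := congrFun h (Fin.last m); simpa [lay] using this
  · funext i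
    have := congrFun h (Fin.castSucc i); simpa [lay] using this

lemma lay_injective (a : Fin n) : Function.Injective (lay (m := m) a) := fun _ _ h => (lay_inj h).2

lemma lay_adj {x y : Fin m → Fin n} (a : Fin n) (h : (hammingGraph n m).Adj x y) :
    (hammingGraph n (m + 1)).Adj (lay a x) (lay a y) := by
  obtain ⟨i, hi, hu⟩ := h
  refine ⟨Fin.castSucc i, by simpa [lay] using hi, ?_⟩
  intro j hj
  induction j using Fin.lastCases with
  | last => simp [lay] at hj
  | cast k =>
    have : x k ≠ y k := by simpa [lay] using hj
    rw [hu k this]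

lemma vert_adj {a b : Fin n} (x : Fin m → Fin n) (h : a ≠ b) :
    (hammingGraph n (m + 1)).Adj (lay a x) (lay b x) := by
  refine ⟨Fin.last m, by simpa [lay] using h, ?_⟩
  intro j hj
  induction j using Fin.lastCases with
  | last => rfl
  | cast k => simp [lay] at hj

/-- classification of edges of the Hamming graph `K_n^{m+1}` -/
lemma edge_cases {e : Sym2 (Fin (m + 1) → Fin n)} (he : e ∈ (hammingGraph n (m + 1)).edgeSet) :
    (∃ a : Fin n, e ∈ Sym2.map (lay a) '' (hammingGraph n m).edgeSet) ∨
    (∃ (x : Fin m → Fin n) (a b : Fin n), a ≠ b ∧ e = s(lay a x, lay b x)) := by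
  induction e with
  | _ u v =>
    rw [SimpleGraph.mem_edgeSet] at he
    obtain ⟨i, hi, hu⟩ := he
    have hsu : lay (u (Fin.last m)) (Fin.init u) = u := Fin.snoc_init_self u
    have hsv : lay (v (Fin.last m)) (Fin.init v) = v := Fin.snoc_init_self v
    induction i using Fin.lastCases with
    | last =>
      right
      have hinit : Fin.init u = Fin.init v := by
        funext k
        by_contra hk
        have : Fin.castSucc k = Fin.last m := hu _ hk
        exact (Fin.castSucc_lt_last k).ne this
      have hv' : lay (v (Fin.last m)) (Fin.init u) = v := by rw [hinit]; exact hsv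
      exact ⟨Fin.init u, u (Fin.last m), v (Fin.last m), hi, by rw [hsu, hv']⟩
    | cast i0 =>
      left
      have hlast : u (Fin.last m) = v (Fin.last m) := by
        by_contra hk
        have : Fin.last m = Fin.castSucc i0 := hu _ hk
        exact (Fin.castSucc_lt_last i0).ne this.symm
      refine ⟨u (Fin.last m), s(Fin.init u, Fin.init v), ?_, ?_⟩
      · rw [SimpleGraph.mem_edgeSet]
        refine ⟨i0, by simpa [Fin.init] using hi, ?_⟩
        intro k hk
        have : Fin.castSucc k = Fin.castSucc i0 := hu _ (by simpa [Fin.init] using hk)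
        exact Fin.castSucc_injective _ this
      · rw [Sym2.map_pair_eq, hsu]
        rw [hlast, hsv]

/-- a vertical edge is never an image of a layer edge -/
lemma vert_not_horiz {x : Fin m → Fin n} {a b c : Fin n} (hab : a ≠ b) :
    s(lay a x, lay b x) ∉ Sym2.map (lay c) '' (hammingGraph n m).edgeSet := by
  rintro ⟨f, -, hf⟩
  induction f with
  | _ y z =>
    rw [Sym2.map_pair_eq, Sym2.eq_iff] at hf
    rcases hf with ⟨h1, h2⟩ | ⟨h1, h2⟩
    · exact hab ((lay_inj h1).1.symm.trans (lay_inj h2).1)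
    · exact hab ((lay_inj h2).1.symm.trans (lay_inj h1).1)

lemma horiz_subset_edgeSet (a : Fin n) :
    Sym2.map (lay a) '' (hammingGraph n m).edgeSet ⊆ (hammingGraph n (m + 1)).edgeSet :=
  fun e ⟨f, hf, he⟩ => he ▸ map_mem_edgeSet (fun _ _ h => lay_adj a h) hf

end P3

section P4
open Fin Function
variable {n m : ℕ}

lemma update_adj {x : Fin m → Fin n} {i : Fin m} {c : Fin n} (h : c ≠ x i) :
    (hammingGraph n m).Adj x (Function.update x i c) := by
  refine ⟨i, by simp [h.symm], ?_⟩
  intro k hk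
  by_contra hki
  exact hk (by simp [Function.update_of_ne hki])

/-- the horizontal incidence family at `lay a x` -/
noncomputable def horF (a : Fin n) (x : Fin m → Fin n) : Finset (Fin (m + 1) → Fin n) :=
  ((Finset.univ : Finset (Fin m × Fin n)).filter (fun p => p.2 ≠ x p.1)).image
    (fun p => lay a (Function.update x p.1 p.2))

lemma horF_mem {a : Fin n} {x : Fin m → Fin n} {u : Fin (m + 1) → Fin n} (hu : u ∈ horF a x) :
    s(lay a x, u) ∈ Sym2.map (lay a) '' (hammingGraph n m).edgeSet ∧ u (Fin.last m) = a := by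
  simp only [horF, Finset.mem_image, Finset.mem_filter] at hu
  obtain ⟨p, ⟨-, hp⟩, rfl⟩ := hu
  exact ⟨⟨s(x, Function.update x p.1 p.2), update_adj hp, by rw [Sym2.map_pair_eq]⟩,
    lay_last _ _⟩

lemma horF_card (hn : 1 ≤ n) (a : Fin n) (x : Fin m → Fin n) :
    (horF a x).card = m * (n - 1) := by
  classical
  rw [horF, Finset.card_image_of_injOn]
  · -- card of the filter
    have h1 : ((Finset.univ : Finset (Fin m × Fin n)).filter (fun p => p.2 = x p.1)).card
        = m := by
      have : ((Finset.univ : Finset (Fin m × Fin n)).filter (fun p => p.2 = x p.1))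
          = (Finset.univ : Finset (Fin m)).image (fun i => (i, x i)) := by
        ext ⟨i, c⟩
        simp only [Finset.mem_filter, Finset.mem_image, Finset.mem_univ, true_and]
        constructor
        · rintro rfl; exact ⟨i, rfl⟩
        · rintro ⟨j, hj⟩; rw [Prod.ext_iff] at hj; obtain ⟨rfl, h⟩ := hj; exact h.symm
      rw [this, Finset.card_image_of_injective _ (fun i j h => (Prod.ext_iff.mp h).1),
        Finset.card_univ, Fintype.card_fin]
    have h2 := Finset.card_filter_add_card_filter_not
      (s := (Finset.univ : Finset (Fin m × Fin n))) (p := fun p => p.2 = x p.1)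
    rw [h1, Finset.card_univ, Fintype.card_prod, Fintype.card_fin, Fintype.card_fin] at h2
    have h3 : m * (n - 1) + m = m * n := by
      have : n - 1 + 1 = n := by omega
      calc m * (n - 1) + m = m * (n - 1 + 1) := by ring
        _ = m * n := by rw [this]
    simp only [ne_eq]
    omega
  · -- injectivity
    intro p hp q hq hpq
    simp only [Finset.coe_filter, Set.mem_setOf_eq, Finset.mem_univ, true_and] at hp hq
    have h := (lay_inj hpq).2
    by_cases hij : p.1 = q.1
    · have : p.2 = q.2 := by
        have := congrFun h p.1
        rwa [Function.update_self, hij, Function.update_self] at this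
      exact Prod.ext hij this
    · exfalso
      have := congrFun h p.1
      rw [Function.update_self, Function.update_of_ne hij] at this
      exact hp this

lemma filter_lt_card {g : ℕ} (hg : g ≤ n) :
    ((Finset.univ : Finset (Fin n)).filter (fun b => b.1 < g)).card = g := by
  classical
  have : ((Finset.univ : Finset (Fin n)).filter (fun b => b.1 < g)).card
      = (Finset.range g).card := by
    apply Finset.card_bij (fun b _ => b.1)
    · intro b hb; simp only [Finset.mem_filter] at hb; exact Finset.mem_range.mpr hb.2
    · intro b hb b' hb' h; exact Fin.ext h
    · intro a ha
      exact ⟨⟨a, lt_of_lt_of_le (Finset.mem_range.mp ha) hg⟩,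
        Finset.mem_filter.mpr ⟨Finset.mem_univ _, Finset.mem_range.mp ha⟩, rfl⟩
  rw [this, Finset.card_range]

/-- the clique seed set -/
def cliqueSet (n m g : ℕ) : Set (Sym2 (Fin (m + 1) → Fin n)) :=
  {e | ∃ (x : Fin m → Fin n) (a b : Fin n), a.1 < g ∧ b.1 < g ∧ a ≠ b ∧ e = s(lay a x, lay b x)}

lemma cliqueSet_subset_edgeSet (g : ℕ) :
    cliqueSet n m g ⊆ (hammingGraph n (m + 1)).edgeSet := by
  rintro e ⟨x, a, b, -, -, hab, rfl⟩
  exact vert_adj x hab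

lemma cliqueSet_ncard [NeZero n] (g : ℕ) :
    (cliqueSet n m g).ncard ≤ g.choose 2 * n ^ m := by
  classical
  set F : ((Fin m → Fin n) × Fin n × Fin n) → Sym2 (Fin (m + 1) → Fin n) :=
    fun q => s(lay q.2.1 q.1, lay q.2.2 q.1) with hF
  set SF : Finset ((Fin m → Fin n) × Fin n × Fin n) :=
    Finset.univ.filter (fun q => q.2.1.1 < q.2.2.1 ∧ q.2.2.1 < g) with hSF
  have hsub : cliqueSet n m g ⊆ F '' ↑SF := by
    rintro e ⟨x, a, b, ha, hb, hab, rfl⟩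
    rcases lt_or_gt_of_ne (fun h => hab (Fin.ext h) : a.1 ≠ b.1) with h | h
    · exact ⟨(x, a, b), Finset.mem_coe.mpr (Finset.mem_filter.mpr ⟨Finset.mem_univ _, h, hb⟩), rfl⟩
    · exact ⟨(x, b, a), Finset.mem_coe.mpr (Finset.mem_filter.mpr ⟨Finset.mem_univ _, h, ha⟩), by rw [hF]; exact (Sym2.eq_swap)⟩
  calc (cliqueSet n m g).ncard ≤ (F '' ↑SF).ncard :=
        Set.ncard_le_ncard hsub (Set.toFinite _)
    _ ≤ (SF : Set ((Fin m → Fin n) × Fin n × Fin n)).ncard :=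
        Set.ncard_image_le (Set.toFinite _)
    _ = SF.card := Set.ncard_coe_finset SF
    _ ≤ ((Finset.univ : Finset (Fin m → Fin n)) ×ˢ Finset.powersetCard 2 (Finset.range g)).card := ?_
    _ = g.choose 2 * n ^ m := ?_
  · apply Finset.card_le_card_of_injOn
      (fun q => (q.1, ({q.2.1.1, q.2.2.1} : Finset ℕ)))
    · intro q hq
      simp only [hSF, Finset.mem_coe, Finset.mem_filter, Finset.mem_univ, true_and] at hq
      refine Finset.mem_product.mpr ⟨Finset.mem_univ _, Finset.mem_powersetCard.mpr ⟨?_, ?_⟩⟩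
      · intro t ht
        simp only [Finset.mem_insert, Finset.mem_singleton] at ht
        rcases ht with rfl | rfl
        · exact Finset.mem_range.mpr (lt_trans hq.1 hq.2)
        · exact Finset.mem_range.mpr hq.2
      · exact Finset.card_pair (Nat.ne_of_lt hq.1)
    · intro q hq q' hq'
      simp only [hSF, Finset.coe_filter, Set.mem_setOf_eq, Finset.mem_univ, true_and] at hq hq'
      intro h
      rw [Prod.ext_iff] at h
      obtain ⟨h1, h2⟩ := h
      simp only at h1 h2
      have m1 : q.2.1.1 = q'.2.1.1 ∨ q.2.1.1 = q'.2.2.1 := by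
        have : q.2.1.1 ∈ ({q'.2.1.1, q'.2.2.1} : Finset ℕ) := h2 ▸ (by simp)
        simpa using this
      have m2 : q.2.2.1 = q'.2.1.1 ∨ q.2.2.1 = q'.2.2.1 := by
        have : q.2.2.1 ∈ ({q'.2.1.1, q'.2.2.1} : Finset ℕ) := h2 ▸ (by simp)
        simpa using this
      have m3 : q'.2.1.1 = q.2.1.1 ∨ q'.2.1.1 = q.2.2.1 := by
        have : q'.2.1.1 ∈ ({q.2.1.1, q.2.2.1} : Finset ℕ) := h2 ▸ (by simp)
        simpa using this
      have e1 : q.2.1.1 = q'.2.1.1 ∧ q.2.2.1 = q'.2.2.1 := by omega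
      exact Prod.ext h1 (Prod.ext (Fin.ext e1.1) (Fin.ext e1.2))
  · rw [Finset.card_product, Finset.card_powersetCard, Finset.card_range, Finset.card_univ,
      Fintype.card_fun, Fintype.card_fin, Fintype.card_fin, mul_comm]

/-- horizontal edges of layers below `j` -/
def horLt (n m j : ℕ) : Set (Sym2 (Fin (m + 1) → Fin n)) :=
  {e | ∃ a : Fin n, a.1 < j ∧ e ∈ Sym2.map (lay a) '' (hammingGraph n m).edgeSet}

/-- vertical edges with lower endpoint below `j` -/
def vertLt (n m j : ℕ) : Set (Sym2 (Fin (m + 1) → Fin n)) :=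
  {e | ∃ (x : Fin m → Fin n) (a b : Fin n), a.1 < j ∧ a ≠ b ∧ e = s(lay a x, lay b x)}

lemma vertLt_subset_edgeSet (j : ℕ) :
    vertLt n m j ⊆ (hammingGraph n (m + 1)).edgeSet := by
  rintro e ⟨x, a, b, -, hab, rfl⟩
  exact vert_adj x hab

lemma horLt_subset_edgeSet (j : ℕ) :
    horLt n m j ⊆ (hammingGraph n (m + 1)).edgeSet := by
  rintro e ⟨a, -, he⟩
  exact horiz_subset_edgeSet a he

lemma vertLt_mono {j k : ℕ} (h : j ≤ k) : vertLt n m j ⊆ vertLt n m k := by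
  rintro e ⟨x, a, b, ha, hab, rfl⟩
  exact ⟨x, a, b, lt_of_lt_of_le ha h, hab, rfl⟩

lemma edgeSet_subset_union :
    (hammingGraph n (m + 1)).edgeSet ⊆ horLt n m n ∪ vertLt n m n := by
  intro e he
  rcases edge_cases he with ⟨a, ha⟩ | ⟨x, a, b, hab, rfl⟩
  · exact Or.inl ⟨a, a.2, ha⟩
  · exact Or.inr ⟨x, a, b, a.2, hab, rfl⟩

end P4

section P5
open Fin Function
variable {n m : ℕ}

lemma mem_vertLt {j : ℕ} {x : Fin m → Fin n} {a b : Fin n} (ha : a.1 < j) (hab : a ≠ b) :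
    s(lay a x, lay b x) ∈ vertLt n m j := ⟨x, a, b, ha, hab, rfl⟩

lemma mem_horLt {j : ℕ} {a : Fin n} {e : Sym2 (Fin (m + 1) → Fin n)} (ha : a.1 < j)
    (he : e ∈ Sym2.map (lay a) '' (hammingGraph n m).edgeSet) : e ∈ horLt n m j :=
  ⟨a, ha, he⟩

lemma mem_cliqueSet {g : ℕ} {x : Fin m → Fin n} {a b : Fin n} (ha : a.1 < g) (hb : b.1 < g)
    (hab : a ≠ b) : s(lay a x, lay b x) ∈ cliqueSet n m g := ⟨x, a, b, ha, hb, hab, rfl⟩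

lemma stage_reaches (r g : ℕ)
    (A : Fin n → Set (Sym2 (Fin m → Fin n)))
    (hAperc : ∀ a : Fin n, EdgePercolates (hammingGraph n m) (r - a.1) (A a))
    (S : Set (Sym2 (Fin (m + 1) → Fin n)))
    (hS1 : ∀ a : Fin n, Sym2.map (lay a) '' A a ⊆ S)
    (hS2 : cliqueSet n m g ⊆ S)
    (hgn : g ≤ n)
    (hB : r ≤ m * (n - 1) + (g - 1) ∨ g = n) :
    ∀ j, j ≤ n → Reaches (hammingGraph n (m + 1)) r S (S ∪ horLt n m j ∪ vertLt n m j) := by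
  intro j
  induction j with
  | zero =>
    intro _
    refine Reaches.of_subset ?_
    rintro e ((he | ⟨a, ha, -⟩) | ⟨x, a, b, ha, -⟩)
    · exact he
    · omega
    · omega
  | succ j ih =>
    intro hj
    have hjn : j < n := hj
    have hstage := ih (le_of_lt hjn)
    set G := hammingGraph n (m + 1) with hG
    set H := hammingGraph n m with hH
    set jf : Fin n := ⟨j, hjn⟩ with hjf
    -- Phase A : percolate layer j
    have hcount : ∀ w : Fin m → Fin n,
        min j r ≤ {e | e ∈ vertLt n m j ∧ lay jf w ∈ e}.ncard := by
      intro w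
      have hmem : ∀ u ∈ ((Finset.univ : Finset (Fin n)).filter
          (fun b => b.1 < min j r)).image (fun b => lay b w),
          s(lay jf w, u) ∈ vertLt n m j := by
        intro u hu
        simp only [Finset.mem_image, Finset.mem_filter, Finset.mem_univ, true_and] at hu
        obtain ⟨b, hb, rfl⟩ := hu
        have hbj : b ≠ jf := by
          intro hbj; rw [hbj] at hb; simp only [hjf] at hb; omega
        have : s(lay b w, lay jf w) ∈ vertLt n m j :=
          mem_vertLt (lt_of_lt_of_le hb (min_le_left j r)) hbj
        rwa [Sym2.eq_swap] at this
      have := card_le_ncard_mem _ hmem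
      rwa [Finset.card_image_of_injective _ (fun b b' h => (lay_inj h).1),
        filter_lt_card (le_trans (min_le_left j r) (le_of_lt hjn))] at this
    have hPA : Reaches G r (S ∪ horLt n m j ∪ vertLt n m j)
        (Sym2.map (lay jf) '' H.edgeSet) := by
      refine Reaches.mono ?_ (embed_reaches (G := G) (H := H) (φ := lay jf)
        (lay_injective jf) (fun a b h => lay_adj jf h)
        (t := r - j) (s := min j r) (by omega)
        (vertLt_subset_edgeSet j)
        (fun e he => by obtain ⟨x, a, b, ha, hab, rfl⟩ := he; exact vert_not_horiz hab)
        hcount (hAperc jf))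
      refine Set.union_subset ?_ Set.subset_union_right
      exact (hS1 jf).trans (Set.subset_union_left.trans Set.subset_union_left)
    have h1 : Reaches G r S
        ((S ∪ horLt n m j ∪ vertLt n m j) ∪ Sym2.map (lay jf) '' H.edgeSet) :=
      hstage.trans (Reaches.union Reaches.self hPA)
    set C1 := (S ∪ horLt n m j ∪ vertLt n m j) ∪ Sym2.map (lay jf) '' H.edgeSet with hC1
    -- Phase B : activate vertical edges at layer j
    have hvb : vertLt n m (j + 1) ⊆ edgeStep G r C1 := by
      rintro e ⟨x, a, b, ha, hab, rfl⟩
      by_cases hlt : a.1 < j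
      · exact subset_edgeStep G r C1 (Or.inl (Or.inr (mem_vertLt hlt hab)))
      have haj : a = jf := Fin.ext (by simp only [hjf]; omega)
      subst haj
      rcases hB with hBr | hgeq
      swap
      · -- g = n : the edge is in the clique seed
        refine subset_edgeStep G r C1 (Or.inl (Or.inl (Or.inl (hS2 ?_))))
        exact mem_cliqueSet (hgeq ▸ jf.2) (hgeq ▸ b.2) hab
      · -- activation by counting
        refine Or.inr ⟨G.mem_edgeSet.mpr (vert_adj x hab), lay jf x,
          Sym2.mem_mk_left _ _, ?_⟩
        have hset : {f | f ∈ G.edgeSet ∧ lay jf x ∈ f ∧ f ∈ C1}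
            = {e | e ∈ {f | f ∈ G.edgeSet ∧ f ∈ C1} ∧ lay jf x ∈ e} := by
          ext f; simp only [Set.mem_setOf_eq]; tauto
        rw [hset]
        classical
        set vertT : Finset (Fin (m + 1) → Fin n) :=
          (((Finset.univ : Finset (Fin n)).filter (fun c => c.1 < g)).erase jf).image
            (fun c => lay c x) with hvertT
        have hmem : ∀ u ∈ horF jf x ∪ vertT,
            s(lay jf x, u) ∈ {f | f ∈ G.edgeSet ∧ f ∈ C1} := by
          intro u hu
          rcases Finset.mem_union.mp hu with hu | hu
          · obtain ⟨he, -⟩ := horF_mem hu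
            exact ⟨horiz_subset_edgeSet jf he, Or.inr he⟩
          · simp only [hvertT, Finset.mem_image, Finset.mem_erase, Finset.mem_filter,
              Finset.mem_univ, true_and] at hu
            obtain ⟨c, ⟨hcj, hcg⟩, rfl⟩ := hu
            refine ⟨G.mem_edgeSet.mpr (vert_adj x (Ne.symm hcj)), ?_⟩
            by_cases hcl : c.1 < j
            · have : s(lay c x, lay jf x) ∈ vertLt n m j := mem_vertLt hcl hcj
              rw [Sym2.eq_swap] at this
              exact Or.inl (Or.inr this)
            · have hjg : jf.1 < g := by
                have : c.1 ≠ j := fun h => hcj (Fin.ext (by simp [hjf, h]))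
                simp only [hjf]; omega
              exact Or.inl (Or.inl (Or.inl (hS2
                (mem_cliqueSet hjg hcg (Ne.symm hcj)))))
        have hcard := card_le_ncard_mem _ hmem
        refine le_trans ?_ hcard
        have hdisj : Disjoint (horF jf x) vertT := by
          rw [Finset.disjoint_left]
          intro u hu hu'
          have h1 := (horF_mem hu).2
          simp only [hvertT, Finset.mem_image, Finset.mem_erase, Finset.mem_filter,
            Finset.mem_univ, true_and] at hu'
          obtain ⟨c, ⟨hcj, -⟩, rfl⟩ := hu'
          exact hcj (by rw [← h1, lay_last])
        rw [Finset.card_union_of_disjoint hdisj,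
          horF_card (by omega : 1 ≤ n) jf x,
          Finset.card_image_of_injective _ (fun b b' h => (lay_inj h).1)]
        have hT : g - 1 ≤ (((Finset.univ : Finset (Fin n)).filter
            (fun c => c.1 < g)).erase jf).card := by
          have := Finset.pred_card_le_card_erase
            (s := (Finset.univ : Finset (Fin n)).filter (fun c => c.1 < g)) (a := jf)
          rwa [filter_lt_card hgn] at this
        omega
    have h2 : Reaches G r C1 (C1 ∪ vertLt n m (j + 1)) :=
      ⟨1, by rw [Function.iterate_one]; exact Set.union_subset (subset_edgeStep G r C1) hvb⟩
    refine Reaches.subset_right ?_ (h1.trans h2)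
    rintro e ((he | ⟨a, ha, hea⟩) | hv)
    · exact Or.inl (Or.inl (Or.inl (Or.inl he)))
    · by_cases hlt : a.1 < j
      · exact Or.inl (Or.inl (Or.inl (Or.inr (mem_horLt hlt hea))))
      · have haj : a = jf := Fin.ext (by simp only [hjf]; omega)
        subst haj
        exact Or.inl (Or.inr hea)
    · exact Or.inr hv

end P5

end Aux

/-- Let `n ≥ 2`, `d ≥ 1`, `r ≥ 1` be integers, `f = r − 1 − (n−1)(d−1)`, and `g = 1`
if `f ≤ −2`, `g = f + 2` if `−1 ≤ f ≤ n−2`, and `g = n` if `f ≥ n−1`.  Then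
`m_e(K_n^d, r) ≤ ∑_{i=0}^{n-1} m_e(K_n^{d-1}, r−i) + C(g, 2)·n^{d-1}`,
where `m_e(H, j)` is interpreted as `0` for `j < 0`. -/
theorem me_hamming_le (n d r : ℕ) (hn : 2 ≤ n) (hd : 1 ≤ d) (hr : 1 ≤ r)
    (f : ℤ) (hf : f = (r : ℤ) - 1 - ((n : ℤ) - 1) * ((d : ℤ) - 1))
    (g : ℕ)
    (hg : (g : ℤ) = if f ≤ -2 then 1 else if f ≤ (n : ℤ) - 2 then f + 2 else (n : ℤ)) :
    me (hammingGraph n d) r ≤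
      (∑ i ∈ Finset.range n, if i ≤ r then me (hammingGraph n (d - 1)) (r - i) else 0)
        + g.choose 2 * n ^ (d - 1) := by
  obtain ⟨m, rfl⟩ : ∃ m, d = m + 1 := ⟨d - 1, by omega⟩
  simp only [Nat.add_sub_cancel]
  haveI : NeZero n := ⟨by omega⟩
  set K := m * (n - 1) with hK
  have hdZ : ((m + 1 : ℕ) : ℤ) - 1 = (m : ℤ) := by push_cast; ring
  have hKZ : (K : ℤ) = ((n : ℤ) - 1) * (m : ℤ) := by
    rw [hK]; push_cast [Nat.cast_sub (by omega : 1 ≤ n)]; ring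
  have hfK : f = (r : ℤ) - 1 - (K : ℤ) := by rw [hf, hdZ, ← hKZ]
  have key : (1 ≤ g ∧ g ≤ n) ∧ (r ≤ K + (g - 1) ∨ g = n) := by
    split_ifs at hg <;> omega
  obtain ⟨⟨hg1, hgn⟩, hB⟩ := key
  have hchoice : ∀ a : Fin n, ∃ A, EdgePercolates (hammingGraph n m) (r - a.1) A ∧
      A.ncard = (if a.1 ≤ r then me (hammingGraph n m) (r - a.1) else 0) := by
    intro a
    by_cases h : a.1 ≤ r
    · simpa [h] using exists_me (hammingGraph n m) (r - a.1)
    · have h0 : r - a.1 = 0 := by omega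
      refine ⟨∅, ?_, by simp [h]⟩
      rw [h0]; exact percolates_zero _
  choose A hAperc hAcard using hchoice
  set S := (⋃ a : Fin n, Sym2.map (lay a) '' A a) ∪ cliqueSet n m g with hS
  have hSsub : S ⊆ (hammingGraph n (m + 1)).edgeSet := by
    refine Set.union_subset ?_ (cliqueSet_subset_edgeSet g)
    refine Set.iUnion_subset fun a => ?_
    exact (Set.image_mono (hAperc a).1).trans (horiz_subset_edgeSet a)
  have hreach := stage_reaches r g A hAperc S
    (fun a => (Set.subset_iUnion (fun a => Sym2.map (lay a) '' A a) a).trans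
      Set.subset_union_left)
    Set.subset_union_right hgn hB n le_rfl
  have hperc : EdgePercolates (hammingGraph n (m + 1)) r S := by
    refine percolates_of_reaches hSsub (Reaches.subset_right ?_ hreach)
    intro e he
    rcases edgeSet_subset_union he with h | h
    · exact Or.inl (Or.inr h)
    · exact Or.inr h
  calc me (hammingGraph n (m + 1)) r ≤ S.ncard := me_le hperc
    _ ≤ (⋃ a : Fin n, Sym2.map (lay a) '' A a).ncard + (cliqueSet n m g).ncard :=
        Set.ncard_union_le _ _
    _ ≤ (∑ a : Fin n, (if a.1 ≤ r then me (hammingGraph n m) (r - a.1) else 0))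
        + g.choose 2 * n ^ m := by
        refine Nat.add_le_add ?_ (cliqueSet_ncard g)
        have hU : (⋃ a : Fin n, Sym2.map (lay a) '' A a)
            = ⋃ a ∈ (Finset.univ : Finset (Fin n)), Sym2.map (lay a) '' A a := by simp
        rw [hU]
        refine le_trans (ncard_biUnion_le' _ _) (le_of_eq (Finset.sum_congr rfl fun a _ => ?_))
        rw [Set.ncard_image_of_injective _ (Sym2.map.injective (lay_injective a)), hAcard a]
    _ = (∑ i ∈ Finset.range n, if i ≤ r then me (hammingGraph n m) (r - i) else 0)
        + g.choose 2 * n ^ m := by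
        rw [Fin.sum_univ_eq_sum_range (fun i => if i ≤ r then me (hammingGraph n m) (r - i)
          else 0) n]
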